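/- Let $a, b \in \mathbb{C}$ and set $c = (a-b)(1+ab)$, $d = (a+b)(1-ab)$. Consider the symmetric matrix $M(w_0, w_1, w_2, w_3) = \begin{pmatrix} cw_0-(a-b)w_3 & -bw_1-aw_2 & (b^2-a^2)w_0 & w_1-w_2 \\ -bw_1-aw_2 & dw_0+(a+b)w_3 & w_1+w_2 & (a^2-b^2)w_0 \\ (b^2-a^2)w_0 & w_1+w_2 & cw_0+(a-b)w_3 & -bw_1+aw_2 \\ w_1-w_2 & (a^2-b^2)w_0 & -bw_1+aw_2 & dw_0-(a+b)w_3 \end{pmatrix}$. Then the restriction of $\det M$ to the plane $w_0 = 0$ equals $\big((b^2-1)w_1^2 - (a^2-1)w_2^2 + (a^2-b^2)w_3^2\big)^2 - 4(1-a^2)(a^2-b^2)w_2^2 w_3^2$, i.e. it factors as the product of the two conics $(b^2-1)w_1^2 - (a^2-1)w_2^2 + (a^2-b^2)w_3^2 \mp 2\sqrt{(1-a^2)(a^2-b^2)}\, w_2 w_3$. -/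

import Mathlib

/-- the restriction to `w₀ = 0` of the determinant of the symmetroid matrix
`M` equals `((b²-1)w₁² - (a²-1)w₂² + (a²-b²)w₃²)² - 4(1-a²)(a²-b²)w₂²w₃²`, i.e. it factors
as the product of two conics. -/
theorem stmt8 (a b w1 w2 w3 : ℂ) :
    let c := (a - b) * (1 + a * b)
    let d := (a + b) * (1 - a * b)
    let M : Matrix (Fin 4) (Fin 4) ℂ := fun i j =>
      (!![c * 0 - (a - b) * w3, -b * w1 - a * w2, (b ^ 2 - a ^ 2) * 0, w1 - w2;
          -b * w1 - a * w2, d * 0 + (a + b) * w3, w1 + w2, (a ^ 2 - b ^ 2) * 0;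
          (b ^ 2 - a ^ 2) * 0, w1 + w2, c * 0 + (a - b) * w3, -b * w1 + a * w2;
          w1 - w2, (a ^ 2 - b ^ 2) * 0, -b * w1 + a * w2, d * 0 - (a + b) * w3]) i j
    M.det =
      ((b ^ 2 - 1) * w1 ^ 2 - (a ^ 2 - 1) * w2 ^ 2 + (a ^ 2 - b ^ 2) * w3 ^ 2) ^ 2
        - 4 * (1 - a ^ 2) * (a ^ 2 - b ^ 2) * w2 ^ 2 * w3 ^ 2 ∧
    ∀ r : ℂ, r ^ 2 = (1 - a ^ 2) * (a ^ 2 - b ^ 2) →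
      M.det =
        ((b ^ 2 - 1) * w1 ^ 2 - (a ^ 2 - 1) * w2 ^ 2 + (a ^ 2 - b ^ 2) * w3 ^ 2
            - 2 * r * w2 * w3) *
        ((b ^ 2 - 1) * w1 ^ 2 - (a ^ 2 - 1) * w2 ^ 2 + (a ^ 2 - b ^ 2) * w3 ^ 2
            + 2 * r * w2 * w3) := by
  intro c d M
  have hM : M = !![c * 0 - (a - b) * w3, -b * w1 - a * w2, (b ^ 2 - a ^ 2) * 0, w1 - w2;
          -b * w1 - a * w2, d * 0 + (a + b) * w3, w1 + w2, (a ^ 2 - b ^ 2) * 0;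
          (b ^ 2 - a ^ 2) * 0, w1 + w2, c * 0 + (a - b) * w3, -b * w1 + a * w2;
          w1 - w2, (a ^ 2 - b ^ 2) * 0, -b * w1 + a * w2, d * 0 - (a + b) * w3] := rfl
  have hdet : M.det = ((b ^ 2 - 1) * w1 ^ 2 - (a ^ 2 - 1) * w2 ^ 2 + (a ^ 2 - b ^ 2) * w3 ^ 2) ^ 2
        - 4 * (1 - a ^ 2) * (a ^ 2 - b ^ 2) * w2 ^ 2 * w3 ^ 2 := by
    rw [hM]
    simp [Matrix.det_succ_row_zero, Fin.sum_univ_succ, Matrix.det_fin_three, c, d, Fin.succAbove, Fin.castSucc, Fin.castAdd, Fin.castLE]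
    ring
  refine ⟨hdet, fun r hr => ?_⟩
  rw [hdet]
  linear_combination 4 * w2 ^ 2 * w3 ^ 2 * hr
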